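/- For all a, b > 0 there exist c > 0 and n₀ ∈ ℕ, depending only on a and b, such that the following holds for every n ≥ n₀: if D ⊆ K is measurable, B₀, B₁, B₂ ⊆ D are pairwise disjoint measurable sets with A(B_i) ≥ a·A(K)/n for i = 0,1,2 and A(D) ≤ b·A(K)/n, and x₁, …, x_n are i.i.d. points uniformly distributed in K, then the probability that each of B₀, B₁, B₂ contains exactly one of the points x₁, …, x_n and that D ∖ (B₀ ∪ B₁ ∪ B₂) contains none of them is at least c. -/

import Mathlib

open MeasureTheory ProbabilityTheory
open scoped ENNReal

noncomputable section

/-- The Euclidean plane. -/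
abbrev E2 : Type := EuclideanSpace ℝ (Fin 2)

/-- The uniform (normalized Lebesgue) measure on a set `S`. -/
def unif (S : Set E2) : Measure E2 := (volume S)⁻¹ • volume.restrict S

lemma exp_neg_two_le_one_sub {x : ℝ} (hx : 0 ≤ x) (hx2 : x ≤ 1/2) :
    Real.exp (-(2*x)) ≤ 1 - x := by
  have h1 : (0:ℝ) < 1 - x := by linarith
  have h2 := Real.log_le_sub_one_of_pos (inv_pos.mpr h1)
  rw [Real.log_inv] at h2
  have h3 : (1-x)⁻¹ ≤ 1 + 2*x := by
    rw [inv_le_iff_one_le_mul₀ h1]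
    nlinarith
  have h4 : -(2*x) ≤ Real.log (1-x) := by linarith
  calc Real.exp (-(2*x)) ≤ Real.exp (Real.log (1-x)) := Real.exp_le_exp.mpr h4
    _ = 1 - x := Real.exp_log h1

theorem prob_one_point_in_each_cell
    (K : Set E2) (hK : IsCompact K) (hKconv : Convex ℝ K)
    (hKint : (interior K).Nonempty)
    (a b : ℝ) (ha : 0 < a) (hb : 0 < b) :
    ∃ c > (0:ℝ), ∃ n₀ : ℕ, ∀ n : ℕ, n₀ ≤ n →
      ∀ D : Set E2, D ⊆ K → MeasurableSet D →
      ∀ B : Fin 3 → Set E2, (∀ k, B k ⊆ D) → (∀ k, MeasurableSet (B k)) →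
        (Pairwise fun k l => Disjoint (B k) (B l)) →
        (∀ k, a * (volume K).toReal / n ≤ (volume (B k)).toReal) →
        (volume D).toReal ≤ b * (volume K).toReal / n →
      ∀ (Ω : Type) (_ : MeasureSpace Ω), IsProbabilityMeasure (ℙ : Measure Ω) →
      ∀ X : Fin n → Ω → E2, (∀ i, Measurable (X i)) →
        iIndepFun X ℙ →
        (∀ i, Measure.map (X i) ℙ = unif K) →
        ENNReal.ofReal c ≤
          ℙ {ω | (∀ k : Fin 3, ({i : Fin n | X i ω ∈ B k}).ncard = 1) ∧
                 ∀ i : Fin n, X i ω ∉ D \ (B 0 ∪ B 1 ∪ B 2)} := by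
  classical
  refine ⟨a^3 / 4 * Real.exp (-(2*b)), by positivity, max 4 ⌈2*b⌉₊, ?_⟩
  intro n hn D hDK hDm B hBD hBm hBdisj hBa hDb Ω mΩ hprob X hXm hXindep hXmap
  have hn4 : 4 ≤ n := le_trans (le_max_left _ _) hn
  have hnR : (0:ℝ) < n := by positivity
  have h2bn : 2 * b ≤ n := by
    calc (2*b : ℝ) ≤ ⌈2*b⌉₊ := Nat.le_ceil _
      _ ≤ n := by exact_mod_cast le_trans (le_max_right _ _) hn
  have hbn : b / n ≤ 1/2 := by
    rw [div_le_iff₀ hnR]; linarith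
  have hbn0 : 0 ≤ b / n := by positivity
  have han0 : 0 ≤ a / n := by positivity
  have h1bn0 : 0 ≤ 1 - b / n := by linarith
  set V : ℝ≥0∞ := volume K with hV
  have hVtop : V ≠ ⊤ := hK.measure_lt_top.ne
  have hV0 : V ≠ 0 := by
    have h1 : 0 < volume (interior K) := isOpen_interior.measure_pos volume hKint
    exact (h1.trans_le (measure_mono interior_subset)).ne'
  have hBK : ∀ k, B k ⊆ K := fun k => (hBD k).trans hDK
  -- values of `unif K`
  have hunif : ∀ S : Set E2, MeasurableSet S → unif K S = V⁻¹ * volume (S ∩ K) := by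
    intro S hS
    rw [unif, Measure.smul_apply, Measure.restrict_apply hS, smul_eq_mul]
  have hμB : ∀ k, ENNReal.ofReal (a/n) ≤ unif K (B k) := by
    intro k
    have hBfin : volume (B k) ≠ ⊤ := ((measure_mono (hBK k)).trans_lt hK.measure_lt_top).ne
    have h1 : ENNReal.ofReal (a * V.toReal / n) ≤ volume (B k) :=
      (ENNReal.ofReal_le_iff_le_toReal hBfin).mpr (hBa k)
    have h2 : ENNReal.ofReal (a * V.toReal / n) = ENNReal.ofReal (a/n) * V := by
      rw [show a * V.toReal / n = (a/n) * V.toReal by ring,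
        ENNReal.ofReal_mul han0, ENNReal.ofReal_toReal hVtop]
    calc ENNReal.ofReal (a/n) = V⁻¹ * (ENNReal.ofReal (a/n) * V) := by
          rw [mul_comm (ENNReal.ofReal _) V, ← mul_assoc, ENNReal.inv_mul_cancel hV0 hVtop,
            one_mul]
      _ ≤ V⁻¹ * volume (B k) := by rw [← h2]; exact mul_le_mul_right h1 _
      _ = unif K (B k) := by
          rw [hunif _ (hBm k), Set.inter_eq_self_of_subset_left (hBK k)]
  have hμDc : ENNReal.ofReal (1 - b/n) ≤ unif K Dᶜ := by
    have hDfin : volume D ≠ ⊤ := ((measure_mono hDK).trans_lt hK.measure_lt_top).ne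
    have hD1 : volume D ≤ ENNReal.ofReal (b/n) * V := by
      calc volume D ≤ ENNReal.ofReal (b * V.toReal / n) :=
            (ENNReal.le_ofReal_iff_toReal_le hDfin (by positivity)).mpr hDb
        _ = ENNReal.ofReal (b/n) * V := by
            rw [show b * V.toReal / n = (b/n) * V.toReal by ring,
              ENNReal.ofReal_mul hbn0, ENNReal.ofReal_toReal hVtop]
    have hKD : volume (K \ D) = V - volume D :=
      measure_diff hDK hDm.nullMeasurableSet hDfin
    have hsub : ENNReal.ofReal (1 - b/n) * V ≤ V - volume D := by
      have e1 : ENNReal.ofReal (1 - b/n) = 1 - ENNReal.ofReal (b/n) := by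
        rw [ENNReal.ofReal_sub _ hbn0, ENNReal.ofReal_one]
      rw [e1, ENNReal.sub_mul (fun _ _ => hVtop), one_mul]
      exact tsub_le_tsub_left hD1 V
    calc ENNReal.ofReal (1 - b/n)
        = V⁻¹ * (ENNReal.ofReal (1 - b/n) * V) := by
          rw [mul_comm (ENNReal.ofReal _) V, ← mul_assoc, ENNReal.inv_mul_cancel hV0 hVtop,
            one_mul]
      _ ≤ V⁻¹ * (V - volume D) := mul_le_mul_right hsub _
      _ = unif K Dᶜ := by
          rw [hunif _ hDm.compl, Set.inter_comm, ← Set.diff_eq, hKD]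
  -- the events
  set T : (Fin 3 ↪ Fin n) → Fin n → Set E2 := fun σ j =>
    if j = σ 0 then B 0 else if j = σ 1 then B 1 else if j = σ 2 then B 2 else Dᶜ with hTdef
  have hTm : ∀ σ j, MeasurableSet (T σ j) := by
    intro σ j
    simp only [hTdef]
    split_ifs
    · exact hBm 0
    · exact hBm 1
    · exact hBm 2
    · exact hDm.compl
  have hne : ∀ (σ : Fin 3 ↪ Fin n) (k l : Fin 3), k ≠ l → σ k ≠ σ l :=
    fun σ k l h => fun h' => h (σ.injective h')
  have hTs : ∀ (σ : Fin 3 ↪ Fin n) (k : Fin 3), T σ (σ k) = B k := by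
    intro σ k
    have h10 := hne σ 1 0 (by decide)
    have h20 := hne σ 2 0 (by decide)
    have h21 := hne σ 2 1 (by decide)
    fin_cases k <;> simp [hTdef, h10, h20, h21]
  have hTd : ∀ (σ : Fin 3 ↪ Fin n) (j : Fin n),
      j ≠ σ 0 → j ≠ σ 1 → j ≠ σ 2 → T σ j = Dᶜ := by
    intro σ j h0 h1 h2
    simp [hTdef, h0, h1, h2]
  set Ev : (Fin 3 ↪ Fin n) → Set Ω := fun σ => ⋂ j, X j ⁻¹' T σ j with hEvdef
  have hEvm : ∀ σ, MeasurableSet (Ev σ) :=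
    fun σ => MeasurableSet.iInter fun j => (hXm j) (hTm σ j)
  have hXS : ∀ (i : Fin n) (S : Set E2), MeasurableSet S → ℙ (X i ⁻¹' S) = unif K S := by
    intro i S hS
    rw [← hXmap i, Measure.map_apply (hXm i) hS]
  have hEvP : ∀ σ, ℙ (Ev σ) = ∏ j, unif K (T σ j) := by
    intro σ
    have h1 := hXindep.measure_inter_preimage_eq_mul Finset.univ
      (sets := T σ) (fun i _ => hTm σ i)
    have h2 : Ev σ = ⋂ i ∈ Finset.univ, X i ⁻¹' T σ i := by
      simp [hEvdef]
    rw [h2, h1]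
    exact Finset.prod_congr rfl fun j _ => hXS j _ (hTm σ j)
  -- lower bound for each event
  have key : ∀ σ, ENNReal.ofReal (a/n) ^ 3 * ENNReal.ofReal (1 - b/n) ^ (n-3) ≤ ℙ (Ev σ) := by
    intro σ
    rw [hEvP σ]
    set s : Finset (Fin n) := {σ 0, σ 1, σ 2} with hs
    have hs3 : s.card = 3 := by
      rw [hs, Finset.card_insert_of_notMem (by simp [hne σ 0 1 (by decide), hne σ 0 2 (by decide)]),
        Finset.card_insert_of_notMem (by simp [hne σ 1 2 (by decide)]), Finset.card_singleton]
    have hcompl : sᶜ.card = n - 3 := by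
      rw [Finset.card_compl, hs3, Fintype.card_fin]
    calc ENNReal.ofReal (a/n) ^ 3 * ENNReal.ofReal (1 - b/n) ^ (n-3)
        = (∏ _j ∈ s, ENNReal.ofReal (a/n)) * (∏ _j ∈ sᶜ, ENNReal.ofReal (1 - b/n)) := by
          rw [Finset.prod_const, Finset.prod_const, hs3, hcompl]
      _ ≤ (∏ j ∈ s, unif K (T σ j)) * (∏ j ∈ sᶜ, unif K (T σ j)) := by
          refine mul_le_mul' (Finset.prod_le_prod' ?_) (Finset.prod_le_prod' ?_)
          · intro j hj
            rw [hs] at hj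
            simp only [Finset.mem_insert, Finset.mem_singleton] at hj
            rcases hj with rfl | rfl | rfl
            · rw [hTs σ 0]; exact hμB 0
            · rw [hTs σ 1]; exact hμB 1
            · rw [hTs σ 2]; exact hμB 2
          · intro j hj
            rw [Finset.mem_compl, hs] at hj
            simp only [Finset.mem_insert, Finset.mem_singleton, not_or] at hj
            rw [hTd σ j hj.1 hj.2.1 hj.2.2]
            exact hμDc
      _ = ∏ j, unif K (T σ j) := Finset.prod_mul_prod_compl s _
  -- disjointness
  have hdisj : Pairwise (Function.onFun Disjoint Ev) := by
    intro σ τ hστ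
    rw [Function.onFun, Set.disjoint_left]
    intro ω hσω hτω
    obtain ⟨k, hk⟩ : ∃ k, σ k ≠ τ k := by
      by_contra h
      push_neg at h
      exact hστ (DFunLike.ext σ τ h)
    have hmemσ : ∀ j, X j ω ∈ T σ j := Set.mem_iInter.mp hσω
    have hmemτ : ∀ j, X j ω ∈ T τ j := Set.mem_iInter.mp hτω
    have h1 : X (σ k) ω ∈ B k := by have := hmemσ (σ k); rwa [hTs] at this
    rcases em (∃ l, σ k = τ l) with ⟨l, hl⟩ | hno
    · have h2 : X (τ l) ω ∈ B l := by
        have := hmemτ (τ l); rwa [hTs] at this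
      have hkl : k ≠ l := by rintro rfl; exact hk hl
      rw [hl] at h1
      exact Set.disjoint_left.mp (hBdisj hkl) h1 h2
    · push_neg at hno
      have h2 : X (σ k) ω ∈ Dᶜ := by
        have := hmemτ (σ k); rwa [hTd τ _ (hno 0) (hno 1) (hno 2)] at this
      exact h2 (hBD k h1)
  -- union is inside the target event
  have hsub : (⋃ σ, Ev σ) ⊆
      {ω | (∀ k : Fin 3, ({i : Fin n | X i ω ∈ B k}).ncard = 1) ∧
        ∀ i : Fin n, X i ω ∉ D \ (B 0 ∪ B 1 ∪ B 2)} := by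
    rintro ω hω
    obtain ⟨σ, hσω⟩ := Set.mem_iUnion.mp hω
    have hmem : ∀ j, X j ω ∈ T σ j := Set.mem_iInter.mp hσω
    have hB : ∀ k, X (σ k) ω ∈ B k := by
      intro k; have := hmem (σ k); rwa [hTs] at this
    have hD : ∀ j, (∀ l, j ≠ σ l) → X j ω ∉ D := by
      intro j hj
      have := hmem j
      rwa [hTd σ j (hj 0) (hj 1) (hj 2)] at this
    constructor
    · intro k
      have hset : {i : Fin n | X i ω ∈ B k} = {σ k} := by
        ext i
        simp only [Set.mem_setOf_eq, Set.mem_singleton_iff]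
        constructor
        · intro hi
          rcases em (∃ l, i = σ l) with ⟨l, rfl⟩ | hno
          · rcases eq_or_ne l k with rfl | hlk
            · rfl
            · exact absurd hi (Set.disjoint_left.mp (hBdisj hlk) (hB l))
          · push_neg at hno
            exact absurd (hBD k hi) (hD i hno)
        · rintro rfl; exact hB k
      rw [hset, Set.ncard_singleton]
    · intro i hi
      rcases em (∃ l, i = σ l) with ⟨l, rfl⟩ | hno
      · refine hi.2 ?_
        have := hB l
        fin_cases l
        · exact Or.inl (Or.inl this)
        · exact Or.inl (Or.inr this)
        · exact Or.inr this
      · push_neg at hno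
        exact (hD i hno) hi.1
  -- numerics
  have hcard : (Fintype.card (Fin 3 ↪ Fin n) : ℝ≥0∞) = (n.descFactorial 3 : ℝ≥0∞) := by
    rw [Fintype.card_embedding_eq, Fintype.card_fin, Fintype.card_fin]
  have hreal : a^3 / 4 * Real.exp (-(2*b)) ≤
      (n.descFactorial 3 : ℝ) * ((a/n)^3 * (1 - b/n)^(n-3)) := by
    obtain ⟨m, rfl⟩ := Nat.exists_eq_add_of_le hn4
    have hdf : ((4+m).descFactorial 3 : ℝ) = (m+2) * (m+3) * (m+4) := by
      show (((4+m) - 2) * (((4+m) - 1) * (((4+m) - 0) * 1)) : ℕ) = ((m+2) * (m+3) * (m+4) : ℝ)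
      push_cast [show 4 + m - 2 = m + 2 by omega, show 4 + m - 1 = m + 3 by omega,
        show 4 + m - 0 = m + 4 by omega]
      ring
    have hnm : ((4+m : ℕ) : ℝ) = (m:ℝ) + 4 := by push_cast; ring
    set N : ℕ := 4 + m with hNdef
    have hNR : (0:ℝ) < N := hnR
    have h1 : a^3 / 4 ≤ ((N).descFactorial 3 : ℝ) * (a/N)^3 := by
      rw [hdf]
      rw [div_pow, ← mul_div_assoc, le_div_iff₀ (by positivity)]
      have hN3 : ((N:ℝ))^3 = ((m:ℝ)+4)^3 := by rw [hnm]
      rw [hN3]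
      have hp : ((m:ℝ)+4)^3 ≤ 4*(((m:ℝ)+2)*((m:ℝ)+3)*((m:ℝ)+4)) := by
        nlinarith [(Nat.cast_nonneg m : (0:ℝ) ≤ m), sq_nonneg ((m:ℝ))]
      calc a^3/4 * (((m:ℝ)+4)^3) ≤ a^3/4 * (4*(((m:ℝ)+2)*((m:ℝ)+3)*((m:ℝ)+4))) :=
            mul_le_mul_of_nonneg_left hp (by positivity)
        _ = ((m:ℝ)+2)*((m:ℝ)+3)*((m:ℝ)+4) * a^3 := by ring
    have h2 : Real.exp (-(2*b)) ≤ (1 - b/N)^(N-3) := by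
      have e1 : Real.exp (-(2*(b/N))) ≤ 1 - b/N := exp_neg_two_le_one_sub hbn0 hbn
      have e2 : Real.exp (-(2*b)) ≤ Real.exp (-(2*(b/N))) ^ (N-3) := by
        rw [← Real.exp_nat_mul]
        apply Real.exp_le_exp.mpr
        have hle : ((N-3 : ℕ):ℝ) ≤ (N:ℝ) := by exact_mod_cast Nat.sub_le N 3
        have hpos : 0 ≤ ((N-3:ℕ):ℝ) := Nat.cast_nonneg _
        rw [show ((N-3:ℕ):ℝ) * -(2*(b/N)) = -(((N-3:ℕ):ℝ) * (2*(b/N))) by ring,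
          neg_le_neg_iff]
        calc ((N-3:ℕ):ℝ) * (2*(b/N)) ≤ (N:ℝ) * (2*(b/N)) := by
              apply mul_le_mul_of_nonneg_right hle (by positivity)
          _ = 2*b := by field_simp
        
      calc Real.exp (-(2*b)) ≤ Real.exp (-(2*(b/N))) ^ (N-3) := e2
        _ ≤ (1 - b/N)^(N-3) := pow_le_pow_left₀ (Real.exp_nonneg _) e1 _
    calc a^3 / 4 * Real.exp (-(2*b))
        ≤ (((N).descFactorial 3 : ℝ) * (a/N)^3) * ((1 - b/N)^(N-3)) := by
          apply mul_le_mul h1 h2 (Real.exp_nonneg _)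
          positivity
      _ = ((N).descFactorial 3 : ℝ) * ((a/N)^3 * (1 - b/N)^(N-3)) := by ring
  -- put it together
  calc ENNReal.ofReal (a^3 / 4 * Real.exp (-(2*b)))
      ≤ ENNReal.ofReal ((n.descFactorial 3 : ℝ) * ((a/n)^3 * (1 - b/n)^(n-3))) :=
        ENNReal.ofReal_le_ofReal hreal
    _ = (Fintype.card (Fin 3 ↪ Fin n) : ℝ≥0∞) *
        (ENNReal.ofReal (a/n) ^ 3 * ENNReal.ofReal (1 - b/n) ^ (n-3)) := by
        rw [ENNReal.ofReal_mul (Nat.cast_nonneg _), ENNReal.ofReal_natCast,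
          ENNReal.ofReal_mul (by positivity), ENNReal.ofReal_pow han0,
          ENNReal.ofReal_pow h1bn0, hcard]
    _ = ∑ _σ : Fin 3 ↪ Fin n, (ENNReal.ofReal (a/n) ^ 3 * ENNReal.ofReal (1 - b/n) ^ (n-3)) := by
        rw [Finset.sum_const, Finset.card_univ, nsmul_eq_mul]
    _ ≤ ∑ σ : Fin 3 ↪ Fin n, ℙ (Ev σ) := Finset.sum_le_sum fun σ _ => key σ
    _ = ℙ (⋃ σ, Ev σ) := by
        rw [measure_iUnion hdisj hEvm, tsum_fintype]
    _ ≤ _ := measure_mono hsub
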